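/- For every integer (r,s)×t bimatrix A, the Graver complexity g(A) := sup{type(x) : x ∈ G(A⁽ⁿ⁾), n ∈ ℕ} is finite, where type(x) is the number of nonzero bricks xᵏ ∈ ℤᵗ of x = (x¹,...,xⁿ). -/

import Mathlib

/-- The conformal partial order on integer vectors. -/
def IsConformal {ι : Type*} (x y : ι → ℤ) : Prop :=
  ∀ i, x i * y i ≥ 0 ∧ |x i| ≤ |y i|

/-- The Graver basis of an integer matrix. -/
def Graver {κ ι : Type*} [Fintype ι] (A : Matrix κ ι ℤ) : Set (ι → ℤ) :=
  {x | x ≠ 0 ∧ A.mulVec x = 0 ∧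
    ∀ y : ι → ℤ, y ≠ 0 → A.mulVec y = 0 → IsConformal y x → y = x}

/-- The n-fold product of the bimatrix with blocks `A1` and `A2`. -/
def nfold {r s t : ℕ} (A1 : Matrix (Fin r) (Fin t) ℤ)
    (A2 : Matrix (Fin s) (Fin t) ℤ) (n : ℕ) :
    Matrix (Fin r ⊕ Fin n × Fin s) (Fin n × Fin t) ℤ :=
  Matrix.of fun i q =>
    match i with
    | Sum.inl a => A1 a q.2
    | Sum.inr p => if p.1 = q.1 then A2 p.2 q.2 else 0

section
namespace GraverAux

lemma conf_iff (a b : ℤ) : (a * b ≥ 0 ∧ |a| ≤ |b|) ↔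
    (a.toNat ≤ b.toNat ∧ (-a).toNat ≤ (-b).toNat) := by
  rw [ge_iff_le, mul_nonneg_iff, Int.abs_eq_natAbs, Int.abs_eq_natAbs, Nat.cast_le]
  omega

/-- The encoding of an integer vector by its positive and negative parts. -/
def phi {ι : Type*} (x : ι → ℤ) : ι ⊕ ι → ℕ :=
  Sum.elim (fun i => (x i).toNat) (fun i => (-(x i)).toNat)

lemma isConformal_iff_phi {ι : Type*} (x y : ι → ℤ) :
    IsConformal x y ↔ phi x ≤ phi y := by
  constructor
  · intro h j
    rcases j with i | i
    · exact ((conf_iff _ _).1 (h i)).1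
    · exact ((conf_iff _ _).1 (h i)).2
  · intro h i
    exact (conf_iff _ _).2 ⟨h (Sum.inl i), h (Sum.inr i)⟩

lemma phi_injective {ι : Type*} : Function.Injective (phi (ι := ι)) := by
  intro x y h
  funext i
  have h1 := congrFun h (Sum.inl i)
  have h2 := congrFun h (Sum.inr i)
  simp only [phi, Sum.elim_inl, Sum.elim_inr] at h1 h2
  omega

lemma isConformal_refl {ι : Type*} (x : ι → ℤ) : IsConformal x x :=
  fun i => ⟨mul_self_nonneg _, le_refl _⟩

lemma isConformal_trans {ι : Type*} {x y z : ι → ℤ}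
    (h1 : IsConformal x y) (h2 : IsConformal y z) : IsConformal x z := by
  rw [isConformal_iff_phi] at *
  exact le_trans h1 h2

lemma graver_finite {κ ι : Type*} [Fintype ι] (A : Matrix κ ι ℤ) :
    (Graver A).Finite := by
  apply Set.Finite.of_finite_image (f := phi) _ (phi_injective.injOn)
  apply IsAntichain.finite_of_partiallyWellOrderedOn (r := (· ≤ ·))
  · rintro u ⟨a, ha, rfl⟩ v ⟨b, hb, rfl⟩ hne hle
    exact hne (congrArg phi (hb.2.2 a ha.1 ha.2.1 ((isConformal_iff_phi a b).2 hle)))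
  · exact Set.isPWO_of_wellQuasiOrderedLE _

end GraverAux

section
namespace GraverAux

variable {ι : Type*}

lemma sign_le {a b : ℤ} (h : a * b ≥ 0 ∧ |a| ≤ |b|) :
    (0 ≤ b → 0 ≤ a) ∧ (b ≤ 0 → a ≤ 0) := by
  have := (conf_iff a b).1 h
  omega

lemma sum_sign (z : ι → ℤ) (M : Multiset (ι → ℤ))
    (h : ∀ e ∈ M, IsConformal e z) (i : ι) :
    (0 ≤ z i → 0 ≤ M.sum i) ∧ (z i ≤ 0 → M.sum i ≤ 0) := by
  induction M using Multiset.induction with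
  | empty => simp
  | cons e M ih =>
    have he := sign_le (h e (Multiset.mem_cons_self _ _) i)
    have hM := ih (fun f hf => h f (Multiset.mem_cons_of_mem hf))
    rw [Multiset.sum_cons]
    have : (e + M.sum) i = e i + M.sum i := rfl
    rw [this]
    omega

lemma conformal_subsum (z : ι → ℤ) (N R : Multiset (ι → ℤ))
    (hN : ∀ e ∈ N, IsConformal e z) (hR : ∀ e ∈ R, IsConformal e z)
    (hsum : N.sum + R.sum = z) : IsConformal N.sum z := by
  intro i
  have h1 := sum_sign z N hN i
  have h2 := sum_sign z R hR i
  have h3 : N.sum i + R.sum i = z i := congrFun hsum i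
  rw [conf_iff]
  have e1 : ∀ a : ℤ, 0 ≤ a → (a.toNat : ℤ) = a := fun a ha => Int.toNat_of_nonneg ha
  omega

lemma sum_ne_zero_of_mem (z : ι → ℤ) (M : Multiset (ι → ℤ))
    (hM : ∀ e ∈ M, IsConformal e z) {g : ι → ℤ} (hg : g ∈ M) (hgz : g ≠ 0) :
    M.sum ≠ 0 := by
  obtain ⟨i, hi⟩ : ∃ i, g i ≠ 0 := by
    by_contra hc
    push_neg at hc
    exact hgz (funext hc)
  obtain ⟨M', rfl⟩ := Multiset.exists_cons_of_mem hg
  intro h0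
  have hsum : g i + M'.sum i = 0 := by
    have := congrFun h0 i
    rw [Multiset.sum_cons] at this
    exact this
  have hgc := hM g (Multiset.mem_cons_self _ _) i
  have h1 := sign_le hgc
  have h2 := sum_sign z M' (fun f hf => hM f (Multiset.mem_cons_of_mem hf)) i
  have h4 := (conf_iff (g i) (z i)).1 hgc
  omega

lemma mulVec_multiset_sum {κ : Type*} [Fintype ι] (A : Matrix κ ι ℤ)
    (M : Multiset (ι → ℤ)) (h : ∀ e ∈ M, A.mulVec e = 0) :
    A.mulVec M.sum = 0 := by
  induction M using Multiset.induction with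
  | empty => simp [Matrix.mulVec_zero]
  | cons e M ih =>
    rw [Multiset.sum_cons, Matrix.mulVec_add, h e (Multiset.mem_cons_self _ _),
      ih (fun f hf => h f (Multiset.mem_cons_of_mem hf))]
    simp

lemma natAbs_sum_pos [Fintype ι] {z : ι → ℤ} (hz : z ≠ 0) :
    1 ≤ ∑ i, (z i).natAbs := by
  obtain ⟨i, hi⟩ : ∃ i, z i ≠ 0 := by
    by_contra hc; push_neg at hc; exact hz (funext hc)
  calc 1 ≤ (z i).natAbs := by omega
  _ ≤ ∑ i, (z i).natAbs :=
    Finset.single_le_sum (f := fun i => (z i).natAbs)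
      (fun _ _ => Nat.zero_le _) (Finset.mem_univ i)

lemma exists_decomp {κ : Type*} [Fintype ι] (A : Matrix κ ι ℤ) :
    ∀ N : ℕ, ∀ z : ι → ℤ, (∑ i, (z i).natAbs) ≤ N → A.mulVec z = 0 →
    ∃ M : Multiset (ι → ℤ),
      (∀ e ∈ M, e ∈ Graver A ∧ IsConformal e z) ∧ M.sum = z := by
  intro N
  induction N with
  | zero =>
    intro z hz _
    have : z = 0 := by
      funext i
      show z i = 0
      have : (z i).natAbs ≤ 0 := le_trans
        (Finset.single_le_sum (f := fun i => (z i).natAbs)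
          (fun _ _ => Nat.zero_le _) (Finset.mem_univ i)) hz
      omega
    exact ⟨0, by simp, by simp [this]⟩
  | succ N ih =>
    intro z hz hker
    by_cases hz0 : z = 0
    · exact ⟨0, by simp, by simp [hz0]⟩
    by_cases hG : z ∈ Graver A
    · refine ⟨{z}, ?_, by simp⟩
      intro e he
      rw [Multiset.mem_singleton] at he
      subst he
      exact ⟨hG, isConformal_refl e⟩
    have hy : ∃ y, y ≠ 0 ∧ A.mulVec y = 0 ∧ IsConformal y z ∧ y ≠ z := by
      by_contra hcon
      push_neg at hcon
      exact hG ⟨hz0, hker, hcon⟩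
    obtain ⟨y, hy0, hyk, hyc, hyne⟩ := hy
    have hwk : A.mulVec (z - y) = 0 := by
      rw [Matrix.mulVec_sub, hker, hyk, sub_zero]
    have hw0 : z - y ≠ 0 := fun h => hyne (by
      have := sub_eq_zero.1 h; exact this.symm)
    have hsplit : ∀ i, (y i).natAbs + ((z - y) i).natAbs = (z i).natAbs := by
      intro i
      have h4 := (conf_iff (y i) (z i)).1 (hyc i)
      have : (z - y) i = z i - y i := rfl
      omega
    have hwc : IsConformal (z - y) z := by
      intro i
      rw [conf_iff]
      have h4 := (conf_iff (y i) (z i)).1 (hyc i)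
      have : (z - y) i = z i - y i := rfl
      omega
    have htot : ∑ i, (y i).natAbs + ∑ i, ((z - y) i).natAbs = ∑ i, (z i).natAbs := by
      rw [← Finset.sum_add_distrib]
      exact Finset.sum_congr rfl (fun i _ => hsplit i)
    have hby := natAbs_sum_pos hy0
    have hbw := natAbs_sum_pos hw0
    obtain ⟨My, hMy, hMysum⟩ := ih y (by omega) hyk
    obtain ⟨Mw, hMw, hMwsum⟩ := ih (z - y) (by omega) hwk
    refine ⟨My + Mw, ?_, ?_⟩
    · intro e he
      rcases Multiset.mem_add.1 he with h | h
      · exact ⟨(hMy e h).1, isConformal_trans (hMy e h).2 hyc⟩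
      · exact ⟨(hMw e h).1, isConformal_trans (hMw e h).2 hwc⟩
    · rw [Multiset.sum_add, hMysum, hMwsum]
      ring

lemma distribute {n : ℕ} (c : Fin n → ℕ) (m : ℕ) (hm : m ≤ ∑ k, c k) :
    ∃ d : Fin n → ℕ, (∀ k, d k ≤ c k) ∧ ∑ k, d k = m := by
  induction m with
  | zero => exact ⟨0, fun k => Nat.zero_le _, by simp⟩
  | succ m ih =>
    obtain ⟨d, hd, hsum⟩ := ih (Nat.le_of_succ_le hm)
    have hex : ∃ k, d k < c k := by
      by_contra hc
      push_neg at hc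
      have : ∑ k, c k ≤ ∑ k, d k := Finset.sum_le_sum (fun k _ => hc k)
      omega
    obtain ⟨k, hk⟩ := hex
    refine ⟨Function.update d k (d k + 1), ?_, ?_⟩
    · intro j
      rcases eq_or_ne j k with rfl | hj
      · simp; omega
      · simp [Function.update_of_ne hj]; exact hd j
    · rw [Finset.sum_update_of_mem (Finset.mem_univ k)]
      rw [← Finset.sum_erase_add _ _ (Finset.mem_univ k)] at hsum
      have : Finset.univ \ {k} = Finset.univ.erase k := by
        ext; simp [Finset.mem_erase, and_comm]
      rw [this]
      omega

end GraverAux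
end
section
namespace GraverAux

variable {α : Type*} [DecidableEq α] {β : Type*} [AddCommMonoid β]

lemma map_sum_eq_count_sum (M : Multiset α) (G : Finset α)
    (h : ∀ e ∈ M, e ∈ G) (f : α → β) :
    (M.map f).sum = ∑ a ∈ G, (M.count a) • f a := by
  induction M using Multiset.induction with
  | empty => simp
  | cons e M ih =>
    have he : e ∈ G := h e (Multiset.mem_cons_self _ _)
    rw [Multiset.map_cons, Multiset.sum_cons,
      ih (fun x hx => h x (Multiset.mem_cons_of_mem hx))]
    have : ∀ a ∈ G, ((e ::ₘ M).count a) • f a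
        = (M.count a) • f a + (if a = e then f a else 0) := by
      intro a _
      rw [Multiset.count_cons, add_smul]
      congr 1
      split <;> simp
    rw [Finset.sum_congr rfl this, Finset.sum_add_distrib,
      Finset.sum_ite_eq' G e f, if_pos he]
    rw [add_comm]

lemma card_eq_count_sum (M : Multiset α) (G : Finset α)
    (h : ∀ e ∈ M, e ∈ G) :
    M.card = ∑ a ∈ G, M.count a := by
  have := map_sum_eq_count_sum (β := ℕ) M G h (fun _ => 1)
  simpa using this

lemma subtype_ite_sum (G : Finset α) (F : {x // x ∈ G} → β) (a : α) :
    ∑ g : {x // x ∈ G}, (if a = ↑g then F g else 0)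
      = if h : a ∈ G then F ⟨a, h⟩ else 0 := by
  split
  · next h =>
    rw [Finset.sum_eq_single_of_mem ⟨a, h⟩ (Finset.mem_univ _)]
    · simp
    · intro b _ hb
      rw [if_neg]
      intro hab
      exact hb (by ext; simp [← hab])
  · next h =>
    apply Finset.sum_eq_zero
    intro g _
    rw [if_neg]
    intro hag
    exact h (hag ▸ g.2)

lemma multiset_sum_apply {ι : Type*} (M : Multiset (ι → ℤ)) (i : ι) :
    M.sum i = (M.map (fun e => e i)).sum := by
  induction M using Multiset.induction with
  | empty => rfl
  | cons e M ih =>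
    rw [Multiset.sum_cons, Multiset.map_cons, Multiset.sum_cons, ← ih]
    rfl

end GraverAux
end
section
namespace GraverAux

lemma mulVec_multiset_sum_apply {κ ι : Type*} [Fintype ι] (A : Matrix κ ι ℤ)
    (M : Multiset (ι → ℤ)) (a : κ) :
    A.mulVec M.sum a = (M.map (fun e => A.mulVec e a)).sum := by
  induction M using Multiset.induction with
  | empty => simp [Matrix.mulVec_zero]
  | cons e M ih =>
    rw [Multiset.sum_cons, Matrix.mulVec_add, Multiset.map_cons, Multiset.sum_cons, ← ih]
    rfl

lemma nfold_mulVec_inl {r s t n : ℕ} (A1 : Matrix (Fin r) (Fin t) ℤ)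
    (A2 : Matrix (Fin s) (Fin t) ℤ) (y : Fin n × Fin t → ℤ) (a : Fin r) :
    (nfold A1 A2 n).mulVec y (Sum.inl a) = ∑ k, A1.mulVec (fun j => y (k, j)) a := by
  simp [Matrix.mulVec, dotProduct, nfold, Fintype.sum_prod_type]

lemma nfold_mulVec_inr {r s t n : ℕ} (A1 : Matrix (Fin r) (Fin t) ℤ)
    (A2 : Matrix (Fin s) (Fin t) ℤ) (y : Fin n × Fin t → ℤ) (k : Fin n) (i : Fin s) :
    (nfold A1 A2 n).mulVec y (Sum.inr (k, i)) = A2.mulVec (fun j => y (k, j)) i := by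
  simp only [Matrix.mulVec, dotProduct, nfold, Matrix.of_apply, Fintype.sum_prod_type]
  rw [Finset.sum_eq_single_of_mem k (Finset.mem_univ k)]
  · simp
  · intro b _ hb
    simp [Ne.symm hb]

lemma key {r t : ℕ} (A1 : Matrix (Fin r) (Fin t) ℤ) (G2 : Finset (Fin t → ℤ)) {n : ℕ}
    (c : Fin n → Multiset (Fin t → ℤ)) (hc : ∀ k, ∀ e ∈ c k, e ∈ G2)
    (w : {g // g ∈ G2} → ℤ) (hw : ∀ g : {g // g ∈ G2}, w g = ∑ k, ((c k).count g.1 : ℤ))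
    (a : Fin r) :
    (Matrix.of fun a (g : {g // g ∈ G2}) => A1.mulVec g.1 a).mulVec w a
      = ∑ k, A1.mulVec ((c k).sum) a := by
  classical
  have step1 : (Matrix.of fun a (g : {g // g ∈ G2}) => A1.mulVec g.1 a).mulVec w a
      = ∑ g : {g // g ∈ G2}, A1.mulVec g.1 a * w g := by
    simp [Matrix.mulVec, dotProduct]
  rw [step1]
  have step2 : ∀ g : {g // g ∈ G2}, A1.mulVec g.1 a * w g
      = ∑ k, A1.mulVec g.1 a * ((c k).count g.1 : ℤ) := by
    intro g
    rw [hw g, Finset.mul_sum]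
  rw [Finset.sum_congr rfl (fun g _ => step2 g), Finset.sum_comm]
  refine Finset.sum_congr rfl (fun k _ => ?_)
  rw [mulVec_multiset_sum_apply, map_sum_eq_count_sum (c k) G2 (hc k)
    (fun e => A1.mulVec e a)]
  rw [Finset.sum_coe_sort G2 (fun e => A1.mulVec e a * ((c k).count e : ℤ))]
  refine Finset.sum_congr rfl (fun e _ => ?_)
  rw [nsmul_eq_mul, mul_comm]

end GraverAux
end

open GraverAux

/-- The Graver complexity of every integer bimatrix is finite: there is a
uniform bound on the number of nonzero bricks (the type) of any element
of any Graver basis G(A⁽ⁿ⁾). -/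
theorem graver_complexity_finite (r s t : ℕ)
    (A1 : Matrix (Fin r) (Fin t) ℤ) (A2 : Matrix (Fin s) (Fin t) ℤ) :
    ∃ g : ℕ, ∀ (n : ℕ) (x : Fin n × Fin t → ℤ),
      x ∈ Graver (nfold A1 A2 n) →
      {k : Fin n | ∃ j, x (k, j) ≠ 0}.ncard ≤ g := by
  classical
  have hfin : (Graver A2).Finite := graver_finite A2
  set G2 : Finset (Fin t → ℤ) := hfin.toFinset with hG2def
  set B : Matrix (Fin r) {g // g ∈ G2} ℤ :=
    Matrix.of (fun a (g : {g // g ∈ G2}) => A1.mulVec g.1 a) with hBdef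
  have hBfin : (Graver B).Finite := graver_finite B
  refine ⟨hBfin.toFinset.sup (fun v => ∑ gg : {g // g ∈ G2}, (v gg).toNat), ?_⟩
  intro n x hx
  obtain ⟨hx1, hx2, hx3⟩ := hx
  -- brick kernel conditions
  have hbrick : ∀ k, A2.mulVec (fun j => x (k, j)) = 0 := by
    intro k
    funext i
    have h := congrFun hx2 (Sum.inr (k, i))
    rw [nfold_mulVec_inr] at h
    exact h
  have hA1row : ∀ a, ∑ k, A1.mulVec (fun j => x (k, j)) a = 0 := by
    intro a
    have h := congrFun hx2 (Sum.inl a)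
    rw [nfold_mulVec_inl] at h
    exact h
  -- decompose each brick into Graver elements of A2
  have hdec : ∀ k, ∃ M : Multiset (Fin t → ℤ),
      (∀ e ∈ M, e ∈ Graver A2 ∧ IsConformal e (fun j => x (k, j))) ∧
      M.sum = (fun j => x (k, j)) :=
    fun k => exists_decomp A2 _ _ le_rfl (hbrick k)
  choose M hMmem hMsum using hdec
  have hMG : ∀ k, ∀ e ∈ M k, e ∈ G2 := by
    intro k e he
    rw [hG2def, Set.Finite.mem_toFinset]
    exact (hMmem k e he).1
  -- the count vector
  set v : {g // g ∈ G2} → ℤ := fun g => ∑ k, ((M k).count g.1 : ℤ) with hvdef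
  have hvnat : ∀ g : {g // g ∈ G2}, v g = ((∑ k, (M k).count g.1 : ℕ) : ℤ) := by
    intro g; rw [hvdef]; push_cast; ring
  have hv0 : ∀ g, 0 ≤ v g := by
    intro g; rw [hvnat]; positivity
  have hvker : B.mulVec v = 0 := by
    funext a
    rw [hBdef, key A1 G2 M hMG v (fun g => rfl) a]
    have : ∀ k, A1.mulVec ((M k).sum) a = A1.mulVec (fun j => x (k, j)) a := by
      intro k; rw [hMsum k]
    rw [Finset.sum_congr rfl (fun k _ => this k)]
    exact hA1row a
  have hvne : v ≠ 0 := by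
    obtain ⟨q, hq⟩ : ∃ q, x q ≠ 0 := Function.ne_iff.1 hx1
    have hb : (fun j => x (q.1, j)) ≠ 0 := by
      intro h
      exact hq (by have := congrFun h q.2; exact this)
    have hMk : M q.1 ≠ 0 := by
      intro h
      apply hb
      rw [← hMsum q.1, h]
      simp
    obtain ⟨e, he⟩ := Multiset.exists_mem_of_ne_zero hMk
    have heG : e ∈ G2 := hMG q.1 e he
    intro h0
    have h1 : (∑ k, (((M k).count e : ℤ))) = 0 := congrFun h0 ⟨e, heG⟩
    rw [← Nat.cast_sum] at h1
    have h2 : 1 ≤ (M q.1).count e := (Multiset.one_le_count_iff_mem).2 he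
    have h3 : (M q.1).count e ≤ ∑ k, (M k).count e :=
      Finset.single_le_sum (f := fun k => (M k).count e)
        (fun _ _ => Nat.zero_le _) (Finset.mem_univ q.1)
    omega
  -- minimality: v is in the Graver basis of B
  have hvG : v ∈ Graver B := by
    refine ⟨hvne, hvker, ?_⟩
    intro w hw0 hwker hwconf
    by_contra hwne
    have hwb : ∀ g, 0 ≤ w g ∧ w g ≤ v g := by
      intro g
      have h1 := (conf_iff (w g) (v g)).1 (hwconf g)
      have h2 := hv0 g
      omega
    have hwle : ∀ g : {g // g ∈ G2}, (w g).toNat ≤ ∑ k, (M k).count g.1 := by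
      intro g
      have h1 := hwb g
      have h2 := hvnat g
      omega
    have hdist : ∀ g : {g // g ∈ G2}, ∃ d : Fin n → ℕ,
        (∀ k, d k ≤ (M k).count g.1) ∧ ∑ k, d k = (w g).toNat :=
      fun g => distribute _ _ (hwle g)
    choose d hd1 hd2 using hdist
    set N : Fin n → Multiset (Fin t → ℤ) :=
      fun k => ∑ g : {g // g ∈ G2}, Multiset.replicate (d g k) g.1 with hNdef
    have hNcount : ∀ k a, (N k).count a = if h : a ∈ G2 then d ⟨a, h⟩ k else 0 := by
      intro k a
      rw [hNdef]
      rw [Multiset.count_sum']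
      have : ∀ g : {g // g ∈ G2}, (Multiset.replicate (d g k) g.1).count a
          = if a = g.1 then d g k else 0 := by
        intro g
        rw [Multiset.count_replicate]
        by_cases h : a = ↑g
        · simp [h]
        · simp [h, Ne.symm h]
      rw [Finset.sum_congr rfl (fun g _ => this g)]
      exact subtype_ite_sum G2 (fun g => d g k) a
    have hNcount' : ∀ k (g : {g // g ∈ G2}), (N k).count g.1 = d g k := by
      intro k g
      rw [hNcount k g.1, dif_pos g.2]
    have hNle : ∀ k, N k ≤ M k := by
      intro k
      rw [Multiset.le_iff_count]
      intro a
      rw [hNcount]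
      split
      · next h => exact hd1 ⟨a, h⟩ k
      · exact Nat.zero_le _
    have hNmem : ∀ k, ∀ e ∈ N k, e ∈ M k :=
      fun k e he => Multiset.mem_of_le (hNle k) he
    have hNG : ∀ k, ∀ e ∈ N k, e ∈ G2 :=
      fun k e he => hMG k e (hNmem k e he)
    have hwcount : ∀ g : {g // g ∈ G2}, w g = ∑ k, ((N k).count g.1 : ℤ) := by
      intro g
      have h1 := hwb g
      have h2 := hd2 g
      have : ∀ k, ((N k).count g.1 : ℤ) = (d g k : ℤ) := by
        intro k; rw [hNcount' k g]
      rw [Finset.sum_congr rfl (fun k _ => this k), ← Nat.cast_sum]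
      omega
    set y : Fin n × Fin t → ℤ := fun q => (N q.1).sum q.2 with hydef
    have hybrick : ∀ k, (fun j => y (k, j)) = (N k).sum := fun k => rfl
    -- y is conformal to x
    have hyconfk : ∀ k, IsConformal ((N k).sum) (fun j => x (k, j)) := by
      intro k
      refine conformal_subsum _ (N k) (M k - N k) ?_ ?_ ?_
      · intro e he; exact (hMmem k e (hNmem k e he)).2
      · intro e he
        exact (hMmem k e (Multiset.mem_of_le (Multiset.sub_le_self _ _) he)).2
      · have h1 : M k - N k + N k = M k := tsub_add_cancel_of_le (hNle k)
        have h2 : (M k - N k).sum + (N k).sum = (M k).sum := by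
          rw [← Multiset.sum_add, h1]
        rw [← hMsum k, ← h2]
        ring
    have hyconf : IsConformal y x := by
      rintro ⟨k, j⟩
      exact hyconfk k j
    -- y is in the kernel
    have hyker : (nfold A1 A2 n).mulVec y = 0 := by
      funext i
      rcases i with a | ⟨k, i⟩
      · rw [nfold_mulVec_inl]
        have h1 : ∀ k, A1.mulVec (fun j => y (k, j)) a = A1.mulVec ((N k).sum) a := by
          intro k; rw [hybrick k]
        rw [Finset.sum_congr rfl (fun k _ => h1 k)]
        have h2 := key A1 G2 N hNG w hwcount a
        rw [← h2, ← hBdef, hwker]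
        rfl
      · rw [nfold_mulVec_inr, hybrick k]
        have : A2.mulVec ((N k).sum) = 0 :=
          mulVec_multiset_sum (A := A2) _ (fun e he => (hMmem k e (hNmem k e he)).1.2.1)
        rw [this]
        rfl
    -- y is nonzero
    have hy0 : y ≠ 0 := by
      obtain ⟨g, hg⟩ : ∃ g, w g ≠ 0 := Function.ne_iff.1 hw0
      have hwg : 1 ≤ (w g).toNat := by
        have := (hwb g).1; omega
      obtain ⟨k, hk⟩ : ∃ k, 1 ≤ d g k := by
        by_contra hc
        push_neg at hc
        have : ∑ k, d g k = 0 := by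
          apply Finset.sum_eq_zero
          intro k _
          have := hc k; omega
        rw [hd2 g] at this
        omega
      have hmem : g.1 ∈ N k := by
        rw [← Multiset.one_le_count_iff_mem, hNcount' k g]
        exact hk
      have hgne : g.1 ≠ 0 := by
        have hg2 : g.1 ∈ Graver A2 := hfin.mem_toFinset.1 g.2
        exact hg2.1
      have hsumne : (N k).sum ≠ 0 :=
        sum_ne_zero_of_mem _ (N k)
          (fun e he => (hMmem k e (hNmem k e he)).2) hmem hgne
      obtain ⟨j, hj⟩ : ∃ j, (N k).sum j ≠ 0 := Function.ne_iff.1 hsumne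
      intro h0
      exact hj (congrFun h0 (k, j))
    -- y differs from x
    have hyne : y ≠ x := by
      obtain ⟨g, hg⟩ : ∃ g, w g ≠ v g := Function.ne_iff.1 hwne
      have hlt : (w g).toNat < ∑ k, (M k).count g.1 := by
        have h1 := hwb g
        have h2 := hvnat g
        omega
      obtain ⟨k, hk⟩ : ∃ k, d g k < (M k).count g.1 := by
        by_contra hc
        push_neg at hc
        have : ∑ k, (M k).count g.1 ≤ ∑ k, d g k :=
          Finset.sum_le_sum (fun k _ => hc k)
        rw [hd2 g] at this
        omega
      have hmem : g.1 ∈ M k - N k := by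
        rw [← Multiset.one_le_count_iff_mem, Multiset.count_sub, hNcount' k g]
        omega
      have hgne : g.1 ≠ 0 := by
        have hg2 : g.1 ∈ Graver A2 := hfin.mem_toFinset.1 g.2
        exact hg2.1
      have hsumne : (M k - N k).sum ≠ 0 :=
        sum_ne_zero_of_mem _ (M k - N k)
          (fun e he => (hMmem k e (Multiset.mem_of_le (Multiset.sub_le_self _ _) he)).2)
          hmem hgne
      intro hyx
      apply hsumne
      have h1 : M k - N k + N k = M k := tsub_add_cancel_of_le (hNle k)
      have h2 : (M k - N k).sum + (N k).sum = (M k).sum := by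
        rw [← Multiset.sum_add, h1]
      funext j
      have h3 := congrFun h2 j
      have h4 : (N k).sum j = x (k, j) := by
        rw [← hyx]
      have h5 : (M k).sum j = x (k, j) := by
        rw [hMsum k]
      have h6 : (M k - N k).sum j + (N k).sum j = (M k).sum j := h3
      have : (M k - N k).sum j = 0 := by omega
      exact this
    exact hyne (hx3 y hy0 hyker hyconf)
  -- the final bound
  have hvmem : v ∈ hBfin.toFinset := hBfin.mem_toFinset.2 hvG
  have hle : ∑ gg : {g // g ∈ G2}, (v gg).toNat
      ≤ hBfin.toFinset.sup (fun v => ∑ gg : {g // g ∈ G2}, (v gg).toNat) :=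
    Finset.le_sup (f := fun v => ∑ gg : {g // g ∈ G2}, (v gg).toNat) hvmem
  -- type(x) ≤ ∑ (v g).toNat
  set T : Finset (Fin n) := Finset.univ.filter (fun k => M k ≠ 0) with hTdef
  have hsub : {k : Fin n | ∃ j, x (k, j) ≠ 0} ⊆ ↑T := by
    intro k hk
    obtain ⟨j, hj⟩ := hk
    rw [hTdef]
    simp only [Finset.coe_filter, Finset.mem_univ, true_and, Set.mem_setOf_eq]
    intro h
    apply hj
    have := hMsum k
    rw [h] at this
    have h2 := congrFun this j
    exact h2.symm
  have h1 : {k : Fin n | ∃ j, x (k, j) ≠ 0}.ncard ≤ T.card := by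
    have := Set.ncard_le_ncard hsub T.finite_toSet
    rwa [Set.ncard_coe_finset] at this
  have h2 : T.card ≤ ∑ k, Multiset.card (M k) := by
    calc T.card = ∑ _k ∈ T, 1 := by simp
    _ ≤ ∑ k ∈ T, Multiset.card (M k) := by
      apply Finset.sum_le_sum
      intro k hk
      rw [hTdef, Finset.mem_filter] at hk
      exact Multiset.card_pos.2 hk.2
    _ ≤ ∑ k, Multiset.card (M k) :=
      Finset.sum_le_sum_of_subset (Finset.filter_subset _ _)
  have h3 : ∑ k, Multiset.card (M k) = ∑ gg : {g // g ∈ G2}, (v gg).toNat := by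
    have e1 : ∀ k, Multiset.card (M k) = ∑ e ∈ G2, (M k).count e :=
      fun k => card_eq_count_sum (M k) G2 (hMG k)
    have e2 : ∀ gg : {g // g ∈ G2}, (v gg).toNat = ∑ k, (M k).count gg.1 := by
      intro gg
      rw [hvnat gg, Int.toNat_natCast]
    calc ∑ k, Multiset.card (M k) = ∑ k, ∑ e ∈ G2, (M k).count e :=
        Finset.sum_congr rfl (fun k _ => e1 k)
    _ = ∑ e ∈ G2, ∑ k, (M k).count e := Finset.sum_comm
    _ = ∑ gg : {g // g ∈ G2}, ∑ k, (M k).count gg.1 :=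
        (Finset.sum_coe_sort G2 (fun e => ∑ k, (M k).count e)).symm
    _ = ∑ gg : {g // g ∈ G2}, (v gg).toNat :=
        Finset.sum_congr rfl (fun gg _ => (e2 gg).symm)
  exact le_trans h1 (le_trans h2 (le_trans (le_of_eq h3) hle))
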